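/- Let X ∈ ℝ^{n×p} and let Y = XB + W, where B ∈ ℝ^{p×L} satisfies B[i,:] = 0 for all i ∉ S for an index set S ⊆ {1,…,p}, and W ∈ ℝ^{n×L}. Suppose the minimum eigenvalue of X[:,S]ᵀX[:,S] is at least c > 0, let B_min = min_{i∈S} ‖B[i,:]‖₂, and let S' ⊊ S be a proper subset. If for some Γ > 0 the noise satisfies ‖W‖_F < (Γ/(1+Γ))·√c·B_min, then ‖(Iₙ − P(S))Y‖_F / ‖(Iₙ − P(S'))Y‖_F < Γ. -/

import Mathlib

open Matrix

/-- The squared Frobenius norm of a real matrix. -/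
noncomputable def frobSq {n L : ℕ} (A : Matrix (Fin n) (Fin L) ℝ) : ℝ :=
  ∑ i, ∑ j, A i j ^ 2

/-- The Frobenius norm of a real matrix. -/
noncomputable def frob {n L : ℕ} (A : Matrix (Fin n) (Fin L) ℝ) : ℝ :=
  Real.sqrt (frobSq A)

/-- The span of the columns of `X` indexed by the index set `S`. -/
def colSpan {n p : ℕ} (X : Matrix (Fin n) (Fin p) ℝ) (S : Finset (Fin p)) :
    Submodule ℝ (Fin n → ℝ) :=
  Submodule.span ℝ ((fun j => fun i => X i j) '' (S : Set (Fin p)))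

/-- `P` is the orthogonal projection matrix onto the subspace `V` of `ℝⁿ`. -/
def IsOrthProjOnto {n : ℕ} (P : Matrix (Fin n) (Fin n) ℝ)
    (V : Submodule ℝ (Fin n → ℝ)) : Prop :=
  P * P = P ∧ Pᵀ = P ∧ LinearMap.range P.mulVecLin = V

/-- The minimum Euclidean row norm `min_{i ∈ S} ‖B[i,:]‖₂` of the rows of `B` indexed
by `S`. -/
noncomputable def minRowNorm {p L : ℕ} (B : Matrix (Fin p) (Fin L) ℝ)
    (S : Finset (Fin p)) : ℝ :=
  sInf ((fun i => Real.sqrt (∑ j, B i j ^ 2)) '' (S : Set (Fin p)))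

lemma proj_dot_zero {n : ℕ} (P : Matrix (Fin n) (Fin n) ℝ) (h2 : P*P = P) (ht : Pᵀ = P)
    (v w : Fin n → ℝ) : ((1 - P).mulVec v) ⬝ᵥ (P.mulVec w) = 0 := by
  rw [dotProduct_mulVec, ← mulVec_transpose, mulVec_mulVec, ht,
    mul_sub, mul_one, h2, sub_self]
  simp

lemma proj_dist_le {n : ℕ} (P : Matrix (Fin n) (Fin n) ℝ) (h2 : P*P = P) (ht : Pᵀ = P)
    (v z : Fin n → ℝ) :
    ∑ i, ((1 - P).mulVec v i)^2 ≤ ∑ i, (v i - P.mulVec z i)^2 := by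
  have hdecomp : ∀ i, v i - P.mulVec z i = (1 - P).mulVec v i + P.mulVec (v - z) i := by
    intro i
    simp [sub_mulVec, mulVec_sub, one_mulVec, Pi.sub_apply]
  have hdot := proj_dot_zero P h2 ht v (v - z)
  calc ∑ i, ((1 - P).mulVec v i)^2
      ≤ ∑ i, ((1 - P).mulVec v i)^2 + ∑ i, (P.mulVec (v-z) i)^2 := by
        have : (0:ℝ) ≤ ∑ i, (P.mulVec (v-z) i)^2 :=
          Finset.sum_nonneg fun i _ => sq_nonneg _
        linarith
    _ = ∑ i, (v i - P.mulVec z i)^2 := by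
        simp only [hdecomp, add_sq]
        rw [Finset.sum_add_distrib, Finset.sum_add_distrib]
        have : ∑ i, 2 * ((1 - P).mulVec v i) * (P.mulVec (v-z) i) = 0 := by
          have h0 : ∑ i, ((1 - P).mulVec v i) * (P.mulVec (v-z) i) = 0 := hdot
          calc ∑ i, 2 * ((1 - P).mulVec v i) * (P.mulVec (v-z) i)
              = 2 * ∑ i, ((1 - P).mulVec v i) * (P.mulVec (v-z) i) := by
                rw [Finset.mul_sum]; congr 1; ext i; ring
            _ = 0 := by rw [h0]; ring
        linarith

lemma mulVec_mem_colSpan {n p : ℕ} (X : Matrix (Fin n) (Fin p) ℝ) (S : Finset (Fin p))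
    (a : Fin p → ℝ) (ha : ∀ i ∉ S, a i = 0) : X.mulVec a ∈ colSpan X S := by
  have : X.mulVec a = ∑ j ∈ S, a j • (fun i => X i j) := by
    funext i
    rw [Finset.sum_apply]
    simp only [Pi.smul_apply, smul_eq_mul]
    rw [mulVec, dotProduct]
    rw [← Finset.sum_subset (Finset.subset_univ S)]
    · exact Finset.sum_congr rfl fun j _ => mul_comm _ _
    · intro j _ hj; rw [ha j hj, mul_zero]
  rw [this]
  exact Submodule.sum_mem _ fun j hj => Submodule.smul_mem _ _
    (Submodule.subset_span ⟨j, hj, rfl⟩)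

lemma colSpan_mem_exists {n p : ℕ} (X : Matrix (Fin n) (Fin p) ℝ) (S : Finset (Fin p))
    (u : Fin n → ℝ) (hu : u ∈ colSpan X S) :
    ∃ a : Fin p → ℝ, (∀ i ∉ S, a i = 0) ∧ u = X.mulVec a := by
  induction hu using Submodule.span_induction with
  | mem x hx =>
      obtain ⟨j, hj, rfl⟩ := hx
      refine ⟨Pi.single j 1, ?_, ?_⟩
      · intro i hi
        exact Pi.single_eq_of_ne (fun h => hi (by rw [h]; exact hj)) 1
      · funext i
        simp [mulVec, dotProduct, Pi.single_apply]
  | zero => exact ⟨0, fun _ _ => rfl, by simp⟩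
  | add x y _ _ hx hy =>
      obtain ⟨a, ha, rfl⟩ := hx
      obtain ⟨b, hb, rfl⟩ := hy
      exact ⟨a + b, fun i hi => by simp [ha i hi, hb i hi], by rw [mulVec_add]⟩
  | smul r x _ hx =>
      obtain ⟨a, ha, rfl⟩ := hx
      exact ⟨r • a, fun i hi => by simp [ha i hi], by rw [mulVec_smul]⟩

lemma frobSq_nonneg {n L : ℕ} (A : Matrix (Fin n) (Fin L) ℝ) : 0 ≤ frobSq A :=
  Finset.sum_nonneg fun _ _ => Finset.sum_nonneg fun _ _ => sq_nonneg _

lemma frob_nonneg {n L : ℕ} (A : Matrix (Fin n) (Fin L) ℝ) : 0 ≤ frob A :=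
  Real.sqrt_nonneg _

lemma frob_eq_norm {n L : ℕ} (A : Matrix (Fin n) (Fin L) ℝ) :
    frob A = ‖((WithLp.equiv 2 ((q : Fin n × Fin L) → ℝ)).symm (fun q => A q.1 q.2))‖ := by
  rw [EuclideanSpace.norm_eq, frob, frobSq]
  congr 1
  rw [Fintype.sum_prod_type]
  exact Finset.sum_congr rfl fun i _ => Finset.sum_congr rfl fun j _ => by
    simp [WithLp.equiv_symm_apply, PiLp.toLp_apply, Real.norm_eq_abs, sq_abs]

lemma frob_add_le {n L : ℕ} (A C : Matrix (Fin n) (Fin L) ℝ) :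
    frob (A + C) ≤ frob A + frob C := by
  rw [frob_eq_norm, frob_eq_norm, frob_eq_norm]
  exact norm_add_le ((WithLp.equiv 2 ((q : Fin n × Fin L) → ℝ)).symm (fun q => A q.1 q.2))
    ((WithLp.equiv 2 ((q : Fin n × Fin L) → ℝ)).symm (fun q => C q.1 q.2))

lemma frob_le_frob {n L : ℕ} (A C : Matrix (Fin n) (Fin L) ℝ) (h : frobSq A ≤ frobSq C) :
    frob A ≤ frob C := Real.sqrt_le_sqrt h

lemma frobSq_mul_eq {n m L : ℕ} (M : Matrix (Fin n) (Fin m) ℝ) (Y : Matrix (Fin m) (Fin L) ℝ) :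
    frobSq (M * Y) = ∑ j, ∑ i, (M.mulVec (fun k => Y k j) i)^2 := by
  rw [frobSq, Finset.sum_comm]
  exact Finset.sum_congr rfl fun j _ => Finset.sum_congr rfl fun i _ => by
    rw [mul_apply, mulVec, dotProduct]

lemma proj_fix {n : ℕ} (P : Matrix (Fin n) (Fin n) ℝ) (h2 : P * P = P)
    (v : Fin n → ℝ) (hv : v ∈ LinearMap.range P.mulVecLin) : P.mulVec v = v := by
  obtain ⟨z, rfl⟩ := hv
  show P.mulVec (P.mulVecLin z) = _
  rw [mulVecLin_apply, mulVec_mulVec, h2]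

lemma frob_proj_le {n L : ℕ} (P : Matrix (Fin n) (Fin n) ℝ) (h2 : P*P = P) (ht : Pᵀ = P)
    (M : Matrix (Fin n) (Fin L) ℝ) : frob ((1 - P) * M) ≤ frob M := by
  apply frob_le_frob
  have hM : frobSq M = ∑ j, ∑ i, M i j ^ 2 := Finset.sum_comm
  rw [frobSq_mul_eq, hM]
  apply Finset.sum_le_sum
  intro j _
  have := proj_dist_le P h2 ht (fun k => M k j) 0
  simpa [mulVec_zero] using this

/-- if `Y = XB + W` with `B` row-supported on `S`, the minimum eigenvalue of
`X[:,S]ᵀX[:,S]` is at least `c > 0`, `S' ⊊ S`, and for some `Γ > 0` the noise satisfies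
`‖W‖_F < (Γ/(1+Γ))·√c·B_min`, then `‖(Iₙ−P(S))Y‖_F / ‖(Iₙ−P(S'))Y‖_F < Γ`. -/
theorem residual_ratio_below_threshold
    {n p L : ℕ} (X : Matrix (Fin n) (Fin p) ℝ)
    (S : Finset (Fin p)) (B : Matrix (Fin p) (Fin L) ℝ)
    (hBsupp : ∀ i ∉ S, ∀ j, B i j = 0)
    (W Y : Matrix (Fin n) (Fin L) ℝ) (hY : Y = X * B + W)
    (c : ℝ) (hc : 0 < c)
    (hmineig : ∀ b : Fin p → ℝ, (∀ i ∉ S, b i = 0) →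
      c * ∑ i, b i ^ 2 ≤ ∑ i, (X.mulVec b i) ^ 2)
    (S' : Finset (Fin p)) (hsub : S' ⊂ S)
    (Γ : ℝ) (hΓ : 0 < Γ)
    (hW : frob W < (Γ / (1 + Γ)) * (Real.sqrt c * minRowNorm B S))
    (PS PS' : Matrix (Fin n) (Fin n) ℝ)
    (hPS : IsOrthProjOnto PS (colSpan X S)) (hPS' : IsOrthProjOnto PS' (colSpan X S')) :
    frob ((1 - PS) * Y) / frob ((1 - PS') * Y) < Γ := by
  obtain ⟨hPS2, hPSt, hPSr⟩ := hPS
  obtain ⟨hPS'2, hPS't, hPS'r⟩ := hPS'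
  obtain ⟨i₀, hi₀S, hi₀S'⟩ := Finset.exists_of_ssubset hsub
  set m := Real.sqrt c * minRowNorm B S with hm
  have hWnn : 0 ≤ frob W := frob_nonneg W
  have hΓ1 : 0 < 1 + Γ := by linarith
  have hcoef : 0 < Γ / (1 + Γ) := div_pos hΓ hΓ1
  have hcoefΓ : (Γ / (1 + Γ)) * (1 + Γ) = Γ := div_mul_cancel₀ Γ (ne_of_gt hΓ1)
  have hmpos : 0 < m := by
    rcases le_or_gt m 0 with h | h
    · nlinarith
    · exact h
  -- numerator bound
  have hXBcol : ∀ j, (fun k => (X * B) k j) = X.mulVec (fun k => B k j) := by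
    intro j; funext i; rw [mul_apply, mulVec, dotProduct]
  have hnum_eq : (1 - PS) * Y = (1 - PS) * W := by
    have hzero : (1 - PS) * (X * B) = 0 := by
      ext i j
      have hmem : X.mulVec (fun k => B k j) ∈ colSpan X S :=
        mulVec_mem_colSpan X S _ (fun i hi => hBsupp i hi j)
      have hfix : PS.mulVec (X.mulVec (fun k => B k j)) = X.mulVec (fun k => B k j) :=
        proj_fix PS hPS2 _ (by rw [hPSr]; exact hmem)
      have hv : ((1 - PS).mulVec (fun k => (X * B) k j)) i = 0 := by
        rw [hXBcol j, sub_mulVec, one_mulVec, hfix]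
        simp
      rw [Matrix.mul_apply, Matrix.zero_apply]
      simpa [mulVec, dotProduct] using hv
    rw [hY, Matrix.mul_add, hzero, zero_add]
  have hnum_le : frob ((1 - PS) * Y) ≤ frob W := by
    rw [hnum_eq]; exact frob_proj_le PS hPS2 hPSt W
  -- denominator: frob ((1-PS')*(X*B)) ≥ m
  have hXB_ge : m ≤ frob ((1 - PS') * (X * B)) := by
    have hcol : ∀ j, c * (B i₀ j)^2
        ≤ ∑ i, ((1 - PS').mulVec (X.mulVec (fun k => B k j)) i)^2 := by
      intro j
      have hmem : PS'.mulVec (X.mulVec (fun k => B k j)) ∈ colSpan X S' := by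
        rw [← hPS'r]; exact ⟨X.mulVec (fun k => B k j), rfl⟩
      obtain ⟨a, haS', hau⟩ := colSpan_mem_exists X S' _ hmem
      have hdiff : (1 - PS').mulVec (X.mulVec (fun k => B k j))
          = X.mulVec ((fun k => B k j) - a) := by
        rw [sub_mulVec, one_mulVec, hau, mulVec_sub]
      have hsupp : ∀ i ∉ S, ((fun k => B k j) - a) i = 0 := by
        intro i hi
        have hiS' : i ∉ S' := fun h => hi (hsub.1 h)
        simp [hBsupp i hi j, haS' i hiS']
      have h1 := hmineig _ hsupp
      have h2 : (B i₀ j)^2 ≤ ∑ i, (((fun k => B k j) - a) i)^2 := by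
        have hai₀ : a i₀ = 0 := haS' i₀ hi₀S'
        have : (((fun k => B k j) - a) i₀)^2 = (B i₀ j)^2 := by
          simp [hai₀]
        rw [← this]
        exact Finset.single_le_sum
          (f := fun i => (((fun k => B k j) - a) i)^2)
          (fun i _ => sq_nonneg _) (Finset.mem_univ i₀)
      calc c * (B i₀ j)^2 ≤ c * ∑ i, (((fun k => B k j) - a) i)^2 := by
            exact mul_le_mul_of_nonneg_left h2 (le_of_lt hc)
        _ ≤ ∑ i, (X.mulVec ((fun k => B k j) - a) i)^2 := h1
        _ = ∑ i, ((1 - PS').mulVec (X.mulVec (fun k => B k j)) i)^2 := by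
            rw [hdiff]
    have hfrobSq : c * ∑ j, (B i₀ j)^2 ≤ frobSq ((1 - PS') * (X * B)) := by
      rw [frobSq_mul_eq, Finset.mul_sum]
      apply Finset.sum_le_sum
      intro j _
      have := hcol j
      calc c * (B i₀ j)^2
          ≤ ∑ i, ((1 - PS').mulVec (X.mulVec (fun k => B k j)) i)^2 := this
        _ = ∑ i, ((1 - PS').mulVec (fun k => (X * B) k j) i)^2 := by rw [hXBcol j]
    have hmin_le : minRowNorm B S ≤ Real.sqrt (∑ j, B i₀ j ^ 2) := by
      apply csInf_le
      · exact (Set.Finite.image _ (S.finite_toSet)).bddBelow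
      · exact ⟨i₀, hi₀S, rfl⟩
    calc m ≤ Real.sqrt c * Real.sqrt (∑ j, B i₀ j ^ 2) := by
          exact mul_le_mul_of_nonneg_left hmin_le (Real.sqrt_nonneg c)
      _ = Real.sqrt (c * ∑ j, B i₀ j ^ 2) := (Real.sqrt_mul (le_of_lt hc) _).symm
      _ ≤ frob ((1 - PS') * (X * B)) := Real.sqrt_le_sqrt hfrobSq
  -- denominator lower bound
  have hden_ge : m - frob W ≤ frob ((1 - PS') * Y) := by
    have hsplit : (1 - PS') * (X * B) = (1 - PS') * Y + (1 - PS') * (-W) := by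
      rw [hY, Matrix.mul_add, Matrix.mul_neg]
      abel
    have htri : frob ((1 - PS') * (X * B))
        ≤ frob ((1 - PS') * Y) + frob ((1 - PS') * (-W)) := by
      rw [hsplit]; exact frob_add_le _ _
    have hnW : frob ((1 - PS') * (-W)) ≤ frob W := by
      have h1 := frob_proj_le PS' hPS'2 hPS't (-W)
      have h2 : frob (-W) = frob W := by
        unfold frob frobSq
        congr 1
        exact Finset.sum_congr rfl fun i _ => Finset.sum_congr rfl fun j _ => by
          simp
      linarith
    linarith
  have hkey : m / (1 + Γ) < m - frob W := by
    rw [div_lt_iff₀ hΓ1]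
    nlinarith [mul_lt_mul_of_pos_right hW hΓ1, hcoefΓ]
  have hmdivpos : 0 < m / (1 + Γ) := div_pos hmpos hΓ1
  have hden_pos : 0 < frob ((1 - PS') * Y) := by linarith
  rw [div_lt_iff₀ hden_pos]
  have hmdiv : m / (1 + Γ) < frob ((1 - PS') * Y) := by linarith
  have heq : Γ * (m / (1 + Γ)) = (Γ / (1 + Γ)) * m := by ring
  have hlast : Γ * (m / (1 + Γ)) < Γ * frob ((1 - PS') * Y) :=
    mul_lt_mul_of_pos_left hmdiv hΓ
  linarith
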